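/- arXiv:2604.23223 — 3 statements merged into one kernel-verified Lean document; each statement's English description precedes it below -/
import Mathlib

section
/- Define, for an integer n and a positive integer k, v_{k,n} := sum over i from n+1 to n+k of [ -C(n-i, i) * C(n+k+i, 2i+1) + C(n-i, i-1) * C(n+k+i, 2i) ], using generalized binomial coefficients for negative upper indices. Then for all n ≥ 0 and k ≥ 1, v_{k+1, n+1} = v_{k, n+1} - v_{k+1, n}. -/
open Finset

/-- Generalized binomial coefficient: classical for nonnegative upper index,
`(-1)^k * C(k-m-1, k)` for negative upper index, and `0` for negative lower index. -/
def gchoose (m k : ℤ) : ℤ :=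
  if k < 0 then 0
  else if m < 0 then (-1) ^ k.toNat * ((k - m - 1).toNat.choose k.toNat : ℤ)
  else (m.toNat.choose k.toNat : ℤ)

/-- The double sequence `v_{k,n}`. -/
noncomputable def vseq (k n : ℤ) : ℤ :=
  ∑ i ∈ Finset.Icc (n + 1) (n + k),
    (-(gchoose (n - i) i * gchoose (n + k + i) (2 * i + 1))
      + gchoose (n - i) (i - 1) * gchoose (n + k + i) (2 * i))


lemma gchoose_pascal (m k : ℤ) (hk : 1 ≤ k) :
    gchoose (m + 1) k = gchoose m k + gchoose m (k - 1) := by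
  have hk0 : ¬ k < 0 := by omega
  have hk10 : ¬ k - 1 < 0 := by omega
  have ht : k.toNat = (k - 1).toNat + 1 := by omega
  unfold gchoose
  simp only [if_neg hk0, if_neg hk10]
  rcases lt_or_ge m 0 with hm | hm
  · rcases eq_or_lt_of_le (by omega : m + 1 ≤ 0) with hm1 | hm1
    · -- m = -1
      have hm' : m = -1 := by omega
      subst hm'
      norm_num
      rw [ht, Nat.choose_zero_succ, Nat.add_sub_cancel, pow_succ]
      push_cast
      ring
    · rw [if_pos (by omega : m + 1 < 0), if_pos (by omega : m < 0), if_pos (by omega : m < 0)]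
      have h1 : (k - m - 1).toNat = (k - (m+1) - 1).toNat + 1 := by omega
      have h2 : (k - 1 - m - 1).toNat = (k - (m+1) - 1).toNat := by omega
      rw [h1, h2, ht, Nat.choose_succ_succ]
      push_cast
      ring
  · rw [if_neg (by omega : ¬ m + 1 < 0), if_neg (by omega : ¬ m < 0), if_neg (by omega : ¬ m < 0)]
    have h1 : (m + 1).toNat = m.toNat + 1 := by omega
    rw [h1, ht, Nat.choose_succ_succ]
    push_cast
    ring

lemma gchoose_neg_one (m : ℤ) (hm : 0 ≤ m) : gchoose (-1) m = (-1) ^ m.toNat := by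
  unfold gchoose
  rw [if_neg (by omega), if_pos (by norm_num)]
  have : (m - -1 - 1).toNat = m.toNat := by omega
  rw [this, Nat.choose_self]
  push_cast; ring

lemma gchoose_self_eq (m : ℤ) (hm : 0 ≤ m) : gchoose m m = 1 := by
  unfold gchoose
  rw [if_neg (by omega), if_neg (by omega), Nat.choose_self]
  norm_num

lemma gchoose_eq_zero (m k : ℤ) (hm : 0 ≤ m) (h : m < k) : gchoose m k = 0 := by
  unfold gchoose
  rw [if_neg (by omega), if_neg (by omega), Nat.choose_eq_zero_of_lt (by omega)]
  norm_num

/-- summand -/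
def Sm (n k i : ℤ) : ℤ :=
  -(gchoose (n - i) i * gchoose (n + k + i) (2 * i + 1))
    + gchoose (n - i) (i - 1) * gchoose (n + k + i) (2 * i)

def Ft (n k i : ℤ) : ℤ := gchoose (n + 1 - i) (i - 1) * gchoose (n + k + 1 + i) (2 * i - 1)

lemma key (n k i : ℤ) (hi : 2 ≤ i) :
    Sm (n+1) (k+1) i - Sm (n+1) k i + Sm n (k+1) i = Ft n k i - Ft n k (i+1) := by
  have h1 : gchoose (n + 1 - i) i = gchoose (n - i) i + gchoose (n - i) (i - 1) := by
    have := gchoose_pascal (n - i) i (by omega)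
    rw [show n - i + 1 = n + 1 - i by ring] at this
    exact this
  have h2 : gchoose (n + 1 - i) (i - 1)
      = gchoose (n - i) (i - 1) + gchoose (n - i) (i - 1 - 1) := by
    have := gchoose_pascal (n - i) (i - 1) (by omega)
    rw [show n - i + 1 = n + 1 - i by ring] at this
    exact this
  have h3 : gchoose (n + k + 2 + i) (2 * i + 1)
      = gchoose (n + k + 1 + i) (2 * i + 1) + gchoose (n + k + 1 + i) (2 * i) := by
    have := gchoose_pascal (n + k + 1 + i) (2 * i + 1) (by omega)
    rw [show n + k + 1 + i + 1 = n + k + 2 + i by ring,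
        show 2 * i + 1 - 1 = 2 * i by ring] at this
    exact this
  have h4 : gchoose (n + k + 2 + i) (2 * i)
      = gchoose (n + k + 1 + i) (2 * i) + gchoose (n + k + 1 + i) (2 * i - 1) := by
    have := gchoose_pascal (n + k + 1 + i) (2 * i) (by omega)
    rw [show n + k + 1 + i + 1 = n + k + 2 + i by ring] at this
    exact this
  simp only [Sm, Ft]
  rw [show n + 1 + (k + 1) + i = n + k + 2 + i by ring,
      show n + 1 + k + i = n + k + 1 + i by ring,
      show n + (k + 1) + i = n + k + 1 + i by ring,
      show n + 1 - (i + 1) = n - i by ring,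
      show i + 1 - 1 = i by ring,
      show n + k + 1 + (i + 1) = n + k + 2 + i by ring,
      show 2 * (i + 1) - 1 = 2 * i + 1 by ring,
      h1, h2, h3, h4]
  ring

lemma sum_split_bot (f : ℤ → ℤ) (a b : ℤ) (h : a ≤ b) :
    ∑ i ∈ Icc a b, f i = f a + ∑ i ∈ Icc (a+1) b, f i := by
  have hI : Icc (a+1) b = Ioc a b := by ext x; simp
  rw [hI, ← Finset.Ioc_insert_left h, Finset.sum_insert (by simp)]

lemma sum_split_top (f : ℤ → ℤ) (a b : ℤ) (h : a ≤ b + 1) :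
    ∑ i ∈ Icc a (b+1), f i = (∑ i ∈ Icc a b, f i) + f (b+1) := by
  have hI : Icc a b = Ico a (b+1) := by ext x; simp
  rw [hI, ← Finset.Ico_insert_right h, Finset.sum_insert (by simp), add_comm]

lemma telescope (F : ℤ → ℤ) (a : ℤ) : ∀ b, a - 1 ≤ b →
    ∑ i ∈ Icc a b, (F i - F (i+1)) = F a - F (b+1) := by
  refine Int.le_induction ?_ ?_
  · rw [show a - 1 + 1 = a by ring, Finset.Icc_eq_empty (by omega), Finset.sum_empty]; ring
  · intro b hb ih
    rw [sum_split_top _ _ _ (by omega), ih]; ring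

theorem stmt_8 (n k : ℤ) (hn : 0 ≤ n) (hk : 1 ≤ k) :
    vseq (k + 1) (n + 1) = vseq k (n + 1) - vseq (k + 1) n := by
  have e1 : vseq (k+1) (n+1)
      = (∑ i ∈ Icc (n+2) (n+k+1), Sm (n+1) (k+1) i) + Sm (n+1) (k+1) (n+k+2) := by
    show (∑ i ∈ Icc (n+1+1) (n+1+(k+1)), Sm (n+1) (k+1) i) = _
    rw [show n+1+1 = n+2 by ring, show n+1+(k+1) = (n+k+1)+1 by ring,
        sum_split_top _ _ _ (by omega), show n+k+1+1 = n+k+2 by ring]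
  have e2 : vseq k (n+1) = ∑ i ∈ Icc (n+2) (n+k+1), Sm (n+1) k i := by
    show (∑ i ∈ Icc (n+1+1) (n+1+k), Sm (n+1) k i) = _
    rw [show n+1+1 = n+2 by ring, show n+1+k = n+k+1 by ring]
  have e3 : vseq (k+1) n
      = Sm n (k+1) (n+1) + ∑ i ∈ Icc (n+2) (n+k+1), Sm n (k+1) i := by
    show (∑ i ∈ Icc (n+1) (n+(k+1)), Sm n (k+1) i) = _
    rw [show n+(k+1) = n+k+1 by ring, sum_split_bot _ _ _ (by omega),
        show n+1+1 = n+2 by ring]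
  have hsum : ∑ i ∈ Icc (n+2) (n+k+1),
      (Sm (n+1) (k+1) i - Sm (n+1) k i + Sm n (k+1) i)
      = Ft n k (n+2) - Ft n k (n+k+2) := by
    rw [show (n+k+1 : ℤ) = (n+k+1) by rfl]
    have := telescope (Ft n k) (n+2) (n+k+1) (by omega)
    rw [show n+k+1+1 = n+k+2 by ring] at this
    rw [← this]
    apply Finset.sum_congr rfl
    intro i hi
    simp only [Finset.mem_Icc] at hi
    exact key n k i (by omega)
  have hsum' : ∑ i ∈ Icc (n+2) (n+k+1),
      (Sm (n+1) (k+1) i - Sm (n+1) k i + Sm n (k+1) i)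
      = (∑ i ∈ Icc (n+2) (n+k+1), Sm (n+1) (k+1) i)
        - (∑ i ∈ Icc (n+2) (n+k+1), Sm (n+1) k i)
        + (∑ i ∈ Icc (n+2) (n+k+1), Sm n (k+1) i) := by
    rw [Finset.sum_add_distrib, Finset.sum_sub_distrib]
  -- boundary 1
  have hB1 : Sm n (k+1) (n+1) + Ft n k (n+2) = 0 := by
    simp only [Sm, Ft]
    rw [show n - (n+1) = -1 by ring, show n + (k+1) + (n+1) = 2*n+k+2 by ring,
        show 2*(n+1)+1 = 2*n+3 by ring, show n+1-1 = n by ring,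
        show 2*(n+1) = 2*n+2 by ring,
        show n+1-(n+2) = -1 by ring, show n+2-1 = n+1 by ring,
        show n+k+1+(n+2) = (2*n+k+2)+1 by ring, show 2*(n+2)-1 = 2*n+3 by ring]
    rw [gchoose_pascal (2*n+k+2) (2*n+3) (by omega),
        show 2*n+3-1 = 2*n+2 by ring,
        gchoose_neg_one (n+1) (by omega), gchoose_neg_one n (by omega),
        show (n+1).toNat = n.toNat + 1 by omega, pow_succ]
    ring
  -- boundary 2
  have hB2 : Sm (n+1) (k+1) (n+k+2) - Ft n k (n+k+2) = 0 := by
    simp only [Sm, Ft]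
    rw [show n+1+(k+1)+(n+k+2) = 2*n+2*k+4 by ring,
        show 2*(n+k+2)+1 = 2*n+2*k+5 by ring,
        show 2*(n+k+2)-1 = 2*n+2*k+3 by ring,
        show 2*(n+k+2) = 2*n+2*k+4 by ring,
        show n+k+1+(n+k+2) = 2*n+2*k+3 by ring]
    rw [gchoose_eq_zero (2*n+2*k+4) (2*n+2*k+5) (by omega) (by omega),
        gchoose_self_eq (2*n+2*k+4) (by omega),
        gchoose_self_eq (2*n+2*k+3) (by omega)]
    ring
  -- combine
  rw [e1, e2, e3]
  have := hsum
  rw [hsum'] at this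
  linarith [hB1, hB2, this]
end

section
/- Define v_{k,n} := sum over i from n+1 to n+k of [ -C(n-i, i) * C(n+k+i, 2i+1) + C(n-i, i-1) * C(n+k+i, 2i) ] with generalized binomial coefficients. Then for every k ≥ 1, v_{k+1, 0} = 1 + v_{k, 0} - v_{k+1, -1}. -/
open Finset

lemma gchoose_of_neg {m k : ℤ} (hm : m < 0) (hk : 0 ≤ k) :
    gchoose m k = (-1) ^ k.toNat * ((k - m - 1).toNat.choose k.toNat : ℤ) := by
  rw [gchoose, if_neg (by omega), if_pos hm]

lemma gchoose_of_nonneg {m k : ℤ} (hm : 0 ≤ m) (hk : 0 ≤ k) :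
    gchoose m k = (m.toNat.choose k.toNat : ℤ) := by
  rw [gchoose, if_neg (by omega), if_neg (by omega)]

lemma gchoose_of_neg_right {m : ℤ} {k : ℤ} (hk : k < 0) : gchoose m k = 0 := by
  rw [gchoose, if_pos hk]

lemma Icc_int_succ_right (m b : ℤ) (h : m ≤ b + 1) :
    Finset.Icc m (b + 1) = insert (b + 1) (Finset.Icc m b) := by
  ext x; simp [Finset.mem_Icc]; omega

lemma sum_Icc_int (f : ℤ → ℤ) (m : ℤ) (n : ℕ) :
    ∑ i ∈ Finset.Icc m (m + n), f i = ∑ j ∈ Finset.range (n + 1), f (m + j) := by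
  induction n with
  | zero => simp
  | succ n ih =>
    have h1 : (m + ((n : ℤ) + 1) : ℤ) = (m + n) + 1 := by ring
    rw [show ((n + 1 : ℕ) : ℤ) = (n : ℤ) + 1 by push_cast; ring, h1,
      Icc_int_succ_right m (m + n) (by omega),
      Finset.sum_insert (by simp [Finset.mem_Icc]), Finset.sum_range_succ, ih]
    push_cast
    ring

def Fa (K a : ℕ) : ℤ :=
  -(-1) ^ a * ((2 * a).choose a : ℤ) * ((K + a + 1).choose (2 * a + 1) : ℤ)

lemma key_s9 (K b : ℕ) :
    ((-((-1:ℤ)) ^ (b+1) * ((2*b+1).choose (b+1) : ℤ) * ((K+b+2).choose (2*b+3) : ℤ)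
        + (-1) ^ b * ((2*b).choose b : ℤ) * ((K+b+2).choose (2*b+2) : ℤ))
      - (-((-1:ℤ)) ^ (b+1) * ((2*b+1).choose (b+1) : ℤ) * ((K+b+1).choose (2*b+3) : ℤ)
        + (-1) ^ b * ((2*b).choose b : ℤ) * ((K+b+1).choose (2*b+2) : ℤ))
      + (-((-1:ℤ)) ^ (b+1) * ((2*b+2).choose (b+1) : ℤ) * ((K+b+1).choose (2*b+3) : ℤ)
        + (-1) ^ b * ((2*b+1).choose b : ℤ) * ((K+b+1).choose (2*b+2) : ℤ)))
    = Fa K (b+1) - Fa K b := by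
  have h1 : (K+b+2).choose (2*b+3) = (K+b+1).choose (2*b+2) + (K+b+1).choose (2*b+3) := by
    rw [show K+b+2 = (K+b+1)+1 by omega, show 2*b+3 = (2*b+2)+1 by omega]
    exact Nat.choose_succ_succ _ _
  have h2 : (K+b+2).choose (2*b+2) = (K+b+1).choose (2*b+1) + (K+b+1).choose (2*b+2) := by
    rw [show K+b+2 = (K+b+1)+1 by omega, show 2*b+2 = (2*b+1)+1 by omega]
    exact Nat.choose_succ_succ _ _
  have h3 : (2*b+2).choose (b+1) = (2*b+1).choose b + (2*b+1).choose (b+1) := by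
    rw [show 2*b+2 = (2*b+1)+1 by omega, show b+1 = b+1 from rfl]
    exact Nat.choose_succ_succ _ _
  simp only [Fa]
  have e1 : K + (b+1) + 1 = K + b + 2 := by omega
  have e2 : 2 * (b+1) + 1 = 2*b+3 := by omega
  have e3 : 2 * (b+1) = 2*b+2 := by omega
  have e4 : K + b + 1 = K + b + 1 := rfl
  rw [e1, e2, e3, h1, h2, h3]
  push_cast
  ring

lemma sum_Icc_int' (f : ℤ → ℤ) (m b : ℤ) (n : ℕ) (h : b = m + n) :
    ∑ i ∈ Finset.Icc m b, f i = ∑ j ∈ Finset.range (n + 1), f (m + j) := by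
  subst h; exact sum_Icc_int f m n

def Tn (K j : ℕ) : ℤ :=
  -((-1:ℤ)) ^ (j+1) * ((2*j+1).choose (j+1) : ℤ) * ((K+j+2).choose (2*j+3) : ℤ)
    + (-1) ^ j * ((2*j).choose j : ℤ) * ((K+j+2).choose (2*j+2) : ℤ)

def Un (K j : ℕ) : ℤ :=
  -((-1:ℤ)) ^ (j+1) * ((2*j+1).choose (j+1) : ℤ) * ((K+j+1).choose (2*j+3) : ℤ)
    + (-1) ^ j * ((2*j).choose j : ℤ) * ((K+j+1).choose (2*j+2) : ℤ)

def Wn (K j : ℕ) : ℤ :=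
  -((-1:ℤ)) ^ (j+1) * ((2*j+2).choose (j+1) : ℤ) * ((K+j+1).choose (2*j+3) : ℤ)
    + (-1) ^ j * ((2*j+1).choose j : ℤ) * ((K+j+1).choose (2*j+2) : ℤ)

lemma key' (K b : ℕ) : Tn K b - Un K b + Wn K b = Fa K (b+1) - Fa K b := by
  simp only [Tn, Un, Wn]
  exact key_s9 K b

lemma evalT (K j : ℕ) (i : ℤ) (hi : i = (j:ℤ) + 1) :
    -(gchoose (0 - i) i * gchoose (0 + ((K:ℤ) + 1) + i) (2 * i + 1))
      + gchoose (0 - i) (i - 1) * gchoose (0 + ((K:ℤ) + 1) + i) (2 * i) = Tn K j := by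
  subst hi
  rw [gchoose_of_neg (m := 0 - ((j:ℤ) + 1)) (k := (j:ℤ) + 1) (by omega) (by omega),
      gchoose_of_neg (m := 0 - ((j:ℤ) + 1)) (k := (j:ℤ) + 1 - 1) (by omega) (by omega),
      gchoose_of_nonneg (m := 0 + ((K:ℤ) + 1) + ((j:ℤ) + 1)) (k := 2 * ((j:ℤ) + 1) + 1) (by omega) (by omega),
      gchoose_of_nonneg (m := 0 + ((K:ℤ) + 1) + ((j:ℤ) + 1)) (k := 2 * ((j:ℤ) + 1)) (by omega) (by omega),
      show ((j:ℤ) + 1).toNat = j + 1 by omega,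
      show ((j:ℤ) + 1 - (0 - ((j:ℤ) + 1)) - 1).toNat = 2*j + 1 by omega,
      show ((j:ℤ) + 1 - 1).toNat = j by omega,
      show ((j:ℤ) + 1 - 1 - (0 - ((j:ℤ) + 1)) - 1).toNat = 2*j by omega,
      show (0 + ((K:ℤ) + 1) + ((j:ℤ) + 1)).toNat = K + j + 2 by omega,
      show (2 * ((j:ℤ) + 1) + 1).toNat = 2*j + 3 by omega,
      show (2 * ((j:ℤ) + 1)).toNat = 2*j + 2 by omega, Tn]
  ring

lemma evalU (K j : ℕ) (i : ℤ) (hi : i = (j:ℤ) + 1) :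
    -(gchoose (0 - i) i * gchoose (0 + (K:ℤ) + i) (2 * i + 1))
      + gchoose (0 - i) (i - 1) * gchoose (0 + (K:ℤ) + i) (2 * i) = Un K j := by
  subst hi
  rw [gchoose_of_neg (m := 0 - ((j:ℤ) + 1)) (k := (j:ℤ) + 1) (by omega) (by omega),
      gchoose_of_neg (m := 0 - ((j:ℤ) + 1)) (k := (j:ℤ) + 1 - 1) (by omega) (by omega),
      gchoose_of_nonneg (m := 0 + (K:ℤ) + ((j:ℤ) + 1)) (k := 2 * ((j:ℤ) + 1) + 1) (by omega) (by omega),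
      gchoose_of_nonneg (m := 0 + (K:ℤ) + ((j:ℤ) + 1)) (k := 2 * ((j:ℤ) + 1)) (by omega) (by omega),
      show ((j:ℤ) + 1).toNat = j + 1 by omega,
      show ((j:ℤ) + 1 - (0 - ((j:ℤ) + 1)) - 1).toNat = 2*j + 1 by omega,
      show ((j:ℤ) + 1 - 1).toNat = j by omega,
      show ((j:ℤ) + 1 - 1 - (0 - ((j:ℤ) + 1)) - 1).toNat = 2*j by omega,
      show (0 + (K:ℤ) + ((j:ℤ) + 1)).toNat = K + j + 1 by omega,
      show (2 * ((j:ℤ) + 1) + 1).toNat = 2*j + 3 by omega,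
      show (2 * ((j:ℤ) + 1)).toNat = 2*j + 2 by omega, Un]
  ring

lemma evalW (K j : ℕ) (i : ℤ) (hi : i = (j:ℤ) + 1) :
    -(gchoose (-1 - i) i * gchoose (-1 + ((K:ℤ) + 1) + i) (2 * i + 1))
      + gchoose (-1 - i) (i - 1) * gchoose (-1 + ((K:ℤ) + 1) + i) (2 * i) = Wn K j := by
  subst hi
  rw [gchoose_of_neg (m := -1 - ((j:ℤ) + 1)) (k := (j:ℤ) + 1) (by omega) (by omega),
      gchoose_of_neg (m := -1 - ((j:ℤ) + 1)) (k := (j:ℤ) + 1 - 1) (by omega) (by omega),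
      gchoose_of_nonneg (m := -1 + ((K:ℤ) + 1) + ((j:ℤ) + 1)) (k := 2 * ((j:ℤ) + 1) + 1) (by omega) (by omega),
      gchoose_of_nonneg (m := -1 + ((K:ℤ) + 1) + ((j:ℤ) + 1)) (k := 2 * ((j:ℤ) + 1)) (by omega) (by omega),
      show ((j:ℤ) + 1).toNat = j + 1 by omega,
      show ((j:ℤ) + 1 - (-1 - ((j:ℤ) + 1)) - 1).toNat = 2*j + 2 by omega,
      show ((j:ℤ) + 1 - 1).toNat = j by omega,
      show ((j:ℤ) + 1 - 1 - (-1 - ((j:ℤ) + 1)) - 1).toNat = 2*j + 1 by omega,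
      show (-1 + ((K:ℤ) + 1) + ((j:ℤ) + 1)).toNat = K + j + 1 by omega,
      show (2 * ((j:ℤ) + 1) + 1).toNat = 2*j + 3 by omega,
      show (2 * ((j:ℤ) + 1)).toNat = 2*j + 2 by omega, Wn]
  ring

lemma evalW0 (K : ℕ) (i : ℤ) (hi : i = 0) :
    -(gchoose (-1 - i) i * gchoose (-1 + ((K:ℤ) + 1) + i) (2 * i + 1))
      + gchoose (-1 - i) (i - 1) * gchoose (-1 + ((K:ℤ) + 1) + i) (2 * i) = -(K:ℤ) := by
  subst hi
  rw [gchoose_of_neg (m := -1 - (0:ℤ)) (k := (0:ℤ)) (by omega) (by omega),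
      gchoose_of_nonneg (m := -1 + ((K:ℤ) + 1) + 0) (k := 2 * (0:ℤ) + 1) (by omega) (by omega),
      gchoose_of_neg_right (m := -1 - (0:ℤ)) (k := (0:ℤ) - 1) (by omega),
      show ((0:ℤ)).toNat = 0 by omega,
      show ((0:ℤ) - (-1 - 0) - 1).toNat = 0 by omega,
      show (-1 + ((K:ℤ) + 1) + 0).toNat = K by omega,
      show (2 * (0:ℤ) + 1).toNat = 1 by omega]
  simp [Nat.choose_one_right]

theorem stmt_9 (k : ℤ) (hk : 1 ≤ k) :
    vseq (k + 1) 0 = 1 + vseq k 0 - vseq (k + 1) (-1) := by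
  lift k to ℕ using by omega with K
  have hK1 : 1 ≤ K := by exact_mod_cast hk
  have E1 : vseq ((K:ℤ) + 1) 0
      = (∑ j ∈ Finset.range K, Tn K j) + (-1) ^ K * ((2*K).choose K : ℤ) := by
    rw [vseq, sum_Icc_int' _ (0 + 1) _ K (by omega), Finset.sum_range_succ]
    congr 1
    · exact Finset.sum_congr rfl fun j _ => evalT K j _ (by omega)
    · rw [evalT K K _ (by omega), Tn,
        show (K+K+2).choose (2*K+3) = 0 from Nat.choose_eq_zero_of_lt (by omega),
        show (K+K+2).choose (2*K+2) = (1:ℕ) from by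
          rw [show 2*K+2 = K+K+2 by omega]; exact Nat.choose_self _]
      push_cast; ring
  have E2 : vseq (K:ℤ) 0 = ∑ j ∈ Finset.range K, Un K j := by
    rw [vseq, sum_Icc_int' _ (0 + 1) _ (K - 1) (by omega),
      show K - 1 + 1 = K by omega]
    exact Finset.sum_congr rfl fun j _ => evalU K j _ (by omega)
  have E3 : vseq ((K:ℤ) + 1) (-1)
      = (∑ j ∈ Finset.range K, Wn K j) + (-(K:ℤ)) := by
    rw [vseq, sum_Icc_int' _ (-1 + 1) _ K (by omega), Finset.sum_range_succ']
    congr 1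
    · exact Finset.sum_congr rfl fun j _ => evalW K j _ (by omega)
    · exact evalW0 K _ (by omega)
  have htel : ∑ j ∈ Finset.range K, (Tn K j - Un K j + Wn K j) = Fa K K - Fa K 0 := by
    rw [Finset.sum_congr rfl fun j (_ : j ∈ Finset.range K) => key' K j]
    exact Finset.sum_range_sub (Fa K) K
  have hsplit : ∑ j ∈ Finset.range K, (Tn K j - Un K j + Wn K j)
      = (∑ j ∈ Finset.range K, Tn K j) - (∑ j ∈ Finset.range K, Un K j)
        + (∑ j ∈ Finset.range K, Wn K j) := by
    rw [Finset.sum_add_distrib, Finset.sum_sub_distrib]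
  have hFaK : Fa K K = -(-1) ^ K * ((2*K).choose K : ℤ) := by
    rw [Fa, show K + K + 1 = 2*K+1 by omega, show 2*K+1 = (2*K)+1 from rfl,
      Nat.choose_self]
    push_cast
    try ring
  have hFa0 : Fa K 0 = -((K:ℤ) + 1) := by
    rw [Fa]
    simp [Nat.choose_one_right]
  rw [hFaK, hFa0] at htel
  rw [E1, E2, E3]
  linarith [htel, hsplit]
end

section
/- Define v_{k,n} := sum over i from n+1 to n+k of [ -C(n-i, i) * C(n+k+i, 2i+1) + C(n-i, i-1) * C(n+k+i, 2i) ] with generalized binomial coefficients. Then for all integers k ≥ 1 and n ≤ -1, v_{k+1, n} = v_{k, n} - v_{k+1, n-1}. -/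
open Finset

lemma gneg (m k : ℤ) (h : k < 0) : gchoose m k = 0 := by simp [gchoose, h]

lemma gzero (m : ℤ) : gchoose m 0 = 1 := by
  unfold gchoose
  simp only [if_neg (show ¬ (0:ℤ) < 0 by omega)]
  split_ifs <;> simp

lemma gtop (m k : ℤ) (h0 : 0 ≤ m) (h : m < k) : gchoose m k = 0 := by
  unfold gchoose
  simp only [if_neg (show ¬ k < 0 by omega), if_neg (show ¬ m < 0 by omega)]
  rw [Nat.choose_eq_zero_of_lt (by omega)]
  simp

lemma gm11 : gchoose (-1) 1 = -1 := by
  unfold gchoose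
  simp only [if_neg (show ¬ (1:ℤ) < 0 by omega), if_pos (show (-1:ℤ) < 0 by omega)]
  norm_num

lemma gpascal (m k : ℤ) : gchoose m k = gchoose (m - 1) k + gchoose (m - 1) (k - 1) := by
  rcases lt_trichotomy k 0 with hk | hk | hk
  · rw [gneg m k hk, gneg _ _ hk, gneg _ _ (by omega : k - 1 < 0)]; ring
  · subst hk
    rw [gzero, gzero, gneg _ _ (by norm_num : (0:ℤ) - 1 < 0)]; ring
  · rcases lt_trichotomy m 0 with hm | hm | hm
    · unfold gchoose
      simp only [if_neg (show ¬ k < 0 by omega), if_neg (show ¬ k - 1 < 0 by omega),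
        if_pos hm, if_pos (show m - 1 < 0 by omega)]
      have e1 : (k - (m - 1) - 1).toNat = (k - m - 1).toNat + 1 := by omega
      have e2 : k.toNat = (k - 1).toNat + 1 := by omega
      have e3 : (k - 1 - (m - 1) - 1) = k - m - 1 := by ring
      rw [e1, e2, e3, Nat.choose_succ_succ]
      push_cast
      ring
    · subst hm
      unfold gchoose
      simp only [if_neg (show ¬ k < 0 by omega), if_neg (show ¬ k - 1 < 0 by omega),
        if_neg (show ¬ (0:ℤ) < 0 by omega), if_pos (show (0:ℤ) - 1 < 0 by omega)]
      have e2 : k.toNat = (k - 1).toNat + 1 := by omega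
      have e3 : (k - (0 - 1) - 1).toNat = k.toNat := by omega
      have e4 : (k - 1 - (0 - 1) - 1).toNat = (k - 1).toNat := by omega
      rw [e3, e4, Nat.choose_self, Nat.choose_self, e2]
      rw [show ((0:ℤ).toNat.choose ((k - 1).toNat + 1) : ℤ) = 0 by
        simp [Nat.choose_eq_zero_of_lt]]
      push_cast
      ring
    · unfold gchoose
      simp only [if_neg (show ¬ k < 0 by omega), if_neg (show ¬ k - 1 < 0 by omega),
        if_neg (show ¬ m < 0 by omega), if_neg (show ¬ m - 1 < 0 by omega)]
      have e1 : m.toNat = (m - 1).toNat + 1 := by omega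
      have e2 : k.toNat = (k - 1).toNat + 1 := by omega
      rw [e1, e2, Nat.choose_succ_succ]
      push_cast
      ring

lemma sum_Icc_top (a b : ℤ) (h : a ≤ b + 1) (f : ℤ → ℤ) :
    ∑ i ∈ Finset.Icc a (b + 1), f i = (∑ i ∈ Finset.Icc a b, f i) + f (b + 1) := by
  have : Finset.Icc a (b + 1) = insert (b + 1) (Finset.Icc a b) := by
    ext x
    simp only [Finset.mem_Icc, Finset.mem_insert]
    omega
  rw [this, Finset.sum_insert (by simp)]
  ring

lemma sum_Icc_bot (a b : ℤ) (h : a ≤ b) (f : ℤ → ℤ) :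
    ∑ i ∈ Finset.Icc a b, f i = f a + ∑ i ∈ Finset.Icc (a + 1) b, f i := by
  have : Finset.Icc a b = insert a (Finset.Icc (a + 1) b) := by
    ext x
    simp only [Finset.mem_Icc, Finset.mem_insert]
    omega
  rw [this, Finset.sum_insert (by simp)]

lemma sum_Icc_shift (a b : ℤ) (f : ℤ → ℤ) :
    ∑ i ∈ Finset.Icc (a + 1) (b + 1), f i = ∑ i ∈ Finset.Icc a b, f (i + 1) := by
  rw [← map_add_right_Icc a b 1, Finset.sum_map]
  rfl

theorem stmt_10 (k n : ℤ) (hk : 1 ≤ k) (hn : n ≤ -1) :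
    vseq (k + 1) n = vseq k n - vseq (k + 1) (n - 1) := by
  set F : ℤ → ℤ := fun i =>
    -(gchoose (n - i) i * gchoose (n + k + i) (2 * i + 1))
      + gchoose (n - i) (i - 1) * gchoose (n + k + i) (2 * i) with hF
  set W : ℤ → ℤ := fun i => gchoose (n - i) i * gchoose (n + k + i) (2 * i) with hW
  set Z : ℤ → ℤ := fun i => gchoose (n - i) (i - 1) * gchoose (n + k + i) (2 * i - 1) with hZ
  set R : ℤ → ℤ := fun i =>
    -(gchoose (n - 1 - i) i * gchoose (n + k + i) (2 * i + 1))
      + gchoose (n - 1 - i) (i - 1) * gchoose (n + k + i) (2 * i) with hR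
  -- Step 1: expand vseq (k+1) n using Pascal on the second factors
  have h1 : vseq (k + 1) n
      = ∑ i ∈ Finset.Icc (n + 1) (n + k + 1), (F i + (-(W i) + Z i)) := by
    unfold vseq
    rw [show n + (k + 1) = n + k + 1 by ring]
    refine Finset.sum_congr rfl (fun i _ => ?_)
    have p1 := gpascal (n + (k + 1) + i) (2 * i + 1)
    have p2 := gpascal (n + (k + 1) + i) (2 * i)
    rw [show n + (k + 1) + i - 1 = n + k + i by ring] at p1 p2
    rw [show 2 * i + 1 - 1 = 2 * i by ring] at p1
    rw [show n + (k + 1) + i = n + k + 1 + i by ring] at p1 p2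
    simp only [hF, hW, hZ]
    rw [p1, p2]
    all_goals ring
  -- Step 2: vseq (k+1) (n-1) as a sum of R over Icc n (n+k)
  have h2 : vseq (k + 1) (n - 1) = ∑ i ∈ Finset.Icc n (n + k), R i := by
    unfold vseq
    rw [show n - 1 + 1 = n by ring, show n - 1 + (k + 1) = n + k by ring]
  -- Step 3: pointwise telescoping identity  Z (i+1) + R i = W i
  have h3 : ∀ i : ℤ, Z (i + 1) + R i = W i := by
    intro i
    have p1 := gpascal (n + k + i + 1) (2 * i + 1)
    rw [show n + k + i + 1 - 1 = n + k + i by ring,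
      show 2 * i + 1 - 1 = 2 * i by ring] at p1
    have p2 := gpascal (n - i) i
    simp only [hZ, hW, hR]
    rw [show n - (i + 1) = n - i - 1 by ring, show i + 1 - 1 = i by ring,
      show n + k + (i + 1) = n + k + i + 1 by ring,
      show 2 * (i + 1) - 1 = 2 * i + 1 by ring, p1, p2,
      show n - i - 1 = n - 1 - i by ring]
    ring
  -- Step 4: edge identity  F (n+k+1) = W (n+k+1)
  have h4 : F (n + k + 1) = W (n + k + 1) := by
    simp only [hF, hW]
    rw [show n - (n + k + 1) = -k - 1 by ring,
      show n + k + (n + k + 1) = 2 * (n + k) + 1 by ring,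
      show 2 * (n + k + 1) + 1 = 2 * (n + k) + 3 by ring,
      show 2 * (n + k + 1) = 2 * (n + k) + 2 by ring,
      show n + k + 1 - 1 = n + k by ring]
    rcases lt_trichotomy (n + k) (-1) with ha | ha | ha
    · rw [gneg (-k - 1) (n + k + 1) (by omega), gneg (-k - 1) (n + k) (by omega)]
      ring
    · rw [show n + k + 1 = 0 by omega, show n + k = -1 from ha,
        show 2 * (-1 : ℤ) + 1 = -1 by ring, show 2 * (-1 : ℤ) + 3 = 1 by ring,
        show 2 * (-1 : ℤ) + 2 = 0 by ring, gneg (-k - 1) (-1) (by omega),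
        gzero, gzero, gm11]
      all_goals ring
    · rw [gtop (2 * (n + k) + 1) (2 * (n + k) + 3) (by omega) (by omega),
        gtop (2 * (n + k) + 1) (2 * (n + k) + 2) (by omega) (by omega)]
      ring
  -- Step 5: sum splitting facts
  have s1 : ∑ i ∈ Finset.Icc (n + 1) (n + k + 1), (F i + (-(W i) + Z i))
      = (∑ i ∈ Finset.Icc (n + 1) (n + k + 1), F i)
        + ∑ i ∈ Finset.Icc (n + 1) (n + k + 1), (-(W i) + Z i) :=
    Finset.sum_add_distrib
  have s2 : ∑ i ∈ Finset.Icc (n + 1) (n + k + 1), (-(W i) + Z i)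
      = (∑ i ∈ Finset.Icc (n + 1) (n + k + 1), -(W i))
        + ∑ i ∈ Finset.Icc (n + 1) (n + k + 1), Z i :=
    Finset.sum_add_distrib
  have s3 : ∑ i ∈ Finset.Icc (n + 1) (n + k + 1), -(W i)
      = -∑ i ∈ Finset.Icc (n + 1) (n + k + 1), W i :=
    Finset.sum_neg_distrib W
  have e2 : ∑ i ∈ Finset.Icc (n + 1) (n + k + 1), F i
      = (∑ i ∈ Finset.Icc (n + 1) (n + k), F i) + F (n + k + 1) :=
    sum_Icc_top (n + 1) (n + k) (by omega) F
  have hv : vseq k n = ∑ i ∈ Finset.Icc (n + 1) (n + k), F i := by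
    unfold vseq
    simp only [hF]
  have e3 : ∑ i ∈ Finset.Icc (n + 1) (n + k + 1), W i
      = (∑ i ∈ Finset.Icc (n + 1) (n + k), W i) + W (n + k + 1) :=
    sum_Icc_top (n + 1) (n + k) (by omega) W
  have e4 : ∑ i ∈ Finset.Icc (n + 1) (n + k + 1), Z i
      = ∑ i ∈ Finset.Icc n (n + k), Z (i + 1) :=
    sum_Icc_shift n (n + k) Z
  have e5 : ∑ i ∈ Finset.Icc n (n + k), (Z (i + 1) + R i)
      = ∑ i ∈ Finset.Icc n (n + k), W i :=
    Finset.sum_congr rfl (fun i _ => h3 i)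
  have e8 : ∑ i ∈ Finset.Icc n (n + k), (Z (i + 1) + R i)
      = (∑ i ∈ Finset.Icc n (n + k), Z (i + 1)) + ∑ i ∈ Finset.Icc n (n + k), R i :=
    Finset.sum_add_distrib
  have e6 : ∑ i ∈ Finset.Icc n (n + k), W i
      = W n + ∑ i ∈ Finset.Icc (n + 1) (n + k), W i :=
    sum_Icc_bot n (n + k) (by omega) W
  have e7 : W n = 0 := by
    simp only [hW]
    rw [show n - n = 0 by ring, gneg 0 n (by omega)]
    ring
  linarith [h1, h2, h4, s1, s2, s3, e2, hv, e3, e4, e5, e8, e6, e7]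
end
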